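/- For every n ≥ 1, every partially ordered NFA (poNFA) over the alphabet Σ_n = {1, 2, …, n} that accepts the language M_n = M'_n ∪ M''_n has more than 2^{n−1} states. -/

import Mathlib

/-- The language `M''_n` over a linearly ordered alphabet: all words containing two
occurrences of some letter `i` with only letters strictly smaller than `i`
in between. -/
def Mpp {α : Type*} [LT α] : Set (List α) :=
  { u | ∃ (x y z : List α) (i : α), u = x ++ i :: (y ++ i :: z) ∧ ∀ c ∈ y, c < i }

/-- State `q` is reachable from state `p` in the NFA `M`. -/
def NFA.Reach {α σ : Type*} (M : NFA α σ) (p q : σ) : Prop :=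
  ∃ w : List α, q ∈ M.evalFrom {p} w

/-- An NFA is *partially ordered* (a poNFA) if the reachability relation is
antisymmetric, i.e., a partial order on the states. -/
def NFA.PartiallyOrdered {α σ : Type*} (M : NFA α σ) : Prop :=
  ∀ p q : σ, M.Reach p q → M.Reach q p → p = q

section Lists
variable {α : Type*} [LinearOrder α]

lemma mem_Mpp_of_indices {w : List α} {a b : ℕ} (hab : a < b) (hb : b < w.length)
    (heq : w[a]'(hab.trans hb) = w[b]'hb)
    (hbet : ∀ t (h1 : a < t) (h2 : t < b), w[t]'(h2.trans hb) < w[a]'(hab.trans hb)) :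
    w ∈ Mpp := by
  refine ⟨w.take a, (w.drop (a+1)).take (b - (a+1)), w.drop (b+1), w[a]'(hab.trans hb), ?_, ?_⟩
  · conv_lhs => rw [← List.take_append_drop a w]
    congr 1
    rw [List.drop_eq_getElem_cons (hab.trans hb)]
    congr 1
    conv_lhs => rw [← List.take_append_drop (b - (a+1)) (w.drop (a+1))]
    congr 1
    rw [List.drop_drop]
    have hba : a + 1 + (b - (a + 1)) = b := by omega
    rw [hba, List.drop_eq_getElem_cons hb, heq]
  · intro c hc
    rw [List.mem_iff_getElem] at hc
    obtain ⟨j, hj, rfl⟩ := hc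
    have hj' : j < b - (a+1) := by
      have := hj
      simp [List.length_take, List.length_drop] at this
      omega
    rw [List.getElem_take, List.getElem_drop]
    exact hbet (a + 1 + j) (by omega) (by omega)

lemma indices_of_mem_Mpp {w : List α} (h : w ∈ Mpp) :
    ∃ a b, ∃ (hab : a < b) (hb : b < w.length),
      w[a]'(hab.trans hb) = w[b]'hb ∧
      ∀ t (h1 : a < t) (h2 : t < b), w[t]'(h2.trans hb) < w[a]'(hab.trans hb) := by
  obtain ⟨x, y, z, i, rfl, hy⟩ := h
  have hlen : (x ++ i :: (y ++ i :: z)).length = x.length + y.length + z.length + 2 := by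
    simp; omega
  refine ⟨x.length, x.length + y.length + 1, by omega, by omega, ?_, ?_⟩
  · have h1 : (x ++ i :: (y ++ i :: z))[x.length]'(by omega) = i := by
      rw [List.getElem_append_right le_rfl]
      simp
    have h2 : (x ++ i :: (y ++ i :: z))[x.length + y.length + 1]'(by omega) = i := by
      rw [List.getElem_append_right (by omega)]
      simp only [show x.length + y.length + 1 - x.length = y.length + 1 from by omega,
        List.getElem_cons_succ]
      rw [List.getElem_append_right le_rfl]
      simp
    rw [h1, h2]
  · intro t h1 h2
    have hgA : (x ++ i :: (y ++ i :: z))[x.length]'(by omega) = i := by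
      rw [List.getElem_append_right le_rfl]; simp
    have hgt : (x ++ i :: (y ++ i :: z))[t]'(by omega) = y[t - x.length - 1]'(by omega) := by
      rw [List.getElem_append_right (by omega)]
      obtain ⟨j, hj⟩ : ∃ j, t - x.length = j + 1 := ⟨t - x.length - 1, by omega⟩
      simp only [hj, List.getElem_cons_succ, show t - x.length - 1 = j from by omega, Nat.add_sub_cancel]
      rw [List.getElem_append_left (by omega)]
    rw [hgA, hgt]
    exact hy _ (List.getElem_mem _)

lemma not_mem_Mpp_glue {u v : List α} {m : α}
    (hu : ∀ c ∈ u, c < m) (hv : ∀ c ∈ v, c < m)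
    (hnu : u ∉ Mpp) (hnv : v ∉ Mpp) : u ++ m :: v ∉ Mpp := by
  intro h
  obtain ⟨a, b, hab, hb, heq, hbet⟩ := indices_of_mem_Mpp h
  have hlen : (u ++ m :: v).length = u.length + v.length + 1 := by simp; omega
  have hgu : ∀ t (ht : t < u.length), (u ++ m :: v)[t]'(by simp; omega) = u[t] := fun t ht =>
    List.getElem_append_left ht
  have hgm : (u ++ m :: v)[u.length]'(by simp) = m := by
    rw [List.getElem_append_right le_rfl]; simp
  have hgv : ∀ t (ht : u.length < t) (ht2 : t < (u ++ m :: v).length),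
      (u ++ m :: v)[t]'ht2 = v[t - u.length - 1]'(by simp at ht2; omega) := by
    intro t ht ht2
    rw [List.getElem_append_right (by omega)]
    obtain ⟨j, hj⟩ : ∃ j, t - u.length = j + 1 := ⟨t - u.length - 1, by omega⟩
    simp only [hj, List.getElem_cons_succ, show t - u.length - 1 = j from by omega, Nat.add_sub_cancel]
  rcases lt_trichotomy b u.length with hbu | hbu | hbu
  · -- both in u
    apply hnu
    refine mem_Mpp_of_indices (w := u) hab hbu ?_ ?_
    · rw [← hgu a (by omega), ← hgu b (by omega)]; exact heq
    · intro t h1 h2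
      rw [← hgu t (by omega), ← hgu a (by omega)]
      exact hbet t h1 h2
  · -- b = u.length : w[a] ∈ u but equals m
    have ha' : a < u.length := by omega
    have hm : u[a] = m := by
      have h2 : (u ++ m :: v)[b]'hb = m := by
        subst hbu; exact hgm
      rw [← hgu a ha', heq, h2]
    have := hu u[a] (List.getElem_mem _)
    rw [hm] at this
    exact absurd this (lt_irrefl m)
  · rcases lt_trichotomy a u.length with hau | hau | hau
    · -- a in u, b in v: t = u.length between, w[t] = m, but w[a] < m
      have hmlt : m < (u ++ m :: v)[a]'(hab.trans hb) := by
        have := hbet u.length hau hbu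
        rwa [hgm] at this
      have hlt : (u ++ m :: v)[a]'(hab.trans hb) < m := by
        rw [hgu a hau]; exact hu _ (List.getElem_mem _)
      exact absurd (hmlt.trans hlt) (lt_irrefl m)
    · -- a = u.length: w[b] ∈ v equals m
      have hb' : b - u.length - 1 < v.length := by omega
      have hm : v[b - u.length - 1]'hb' = m := by
        have ha2 : (u ++ m :: v)[a]'(hab.trans hb) = m := by
          subst hau; exact hgm
        rw [← hgv b hbu hb, ← heq, ha2]
      have := hv _ (List.getElem_mem hb')
      rw [hm] at this
      exact absurd this (lt_irrefl m)
    · -- both in v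
      apply hnv
      have hb' : b - u.length - 1 < v.length := by omega
      have ha' : a - u.length - 1 < v.length := by omega
      refine mem_Mpp_of_indices (w := v) (a := a - u.length - 1) (b := b - u.length - 1)
        (by omega) hb' ?_ ?_
      · rw [← hgv a hau (by omega), ← hgv b hbu hb]; exact heq
      · intro t h1 h2
        have := hbet (t + u.length + 1) (by omega) (by omega)
        rw [hgv (t + u.length + 1) (by omega) (by omega), hgv a hau (by omega)] at this
        simpa only [show t + u.length + 1 - u.length - 1 = t from by omega] using this

lemma nil_not_mem_Mpp : ([] : List α) ∉ Mpp := by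
  intro h
  obtain ⟨a, b, hab, hb, _⟩ := indices_of_mem_Mpp h
  simp at hb

end Lists

section Zw
variable {α : Type*} [LinearOrder α]

def Zw : List α → List α
  | [] => []
  | a :: l => Zw l ++ a :: Zw l

lemma mem_Zw {l : List α} {x : α} : x ∈ Zw l ↔ x ∈ l := by
  induction l with
  | nil => simp [Zw]
  | cons a l ih => simp [Zw, ih]; tauto

lemma length_Zw (l : List α) : (Zw l).length = 2 ^ l.length - 1 := by
  induction l with
  | nil => simp [Zw]
  | cons a l ih =>
    simp only [Zw, List.length_append, List.length_cons, ih, List.length_cons]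
    have : 1 ≤ 2 ^ l.length := Nat.one_le_two_pow
    ring_nf
    omega

lemma Zw_not_mem_Mpp {l : List α} (hl : l.Pairwise (· > ·)) : Zw l ∉ Mpp := by
  induction l with
  | nil => exact nil_not_mem_Mpp
  | cons a l ih =>
    have h1 : ∀ c ∈ Zw l, c < a := fun c hc => (List.pairwise_cons.mp hl).1 c (mem_Zw.mp hc)
    exact not_mem_Mpp_glue h1 h1 (ih hl.of_cons) (ih hl.of_cons)

lemma Zw_erase_not_mem_Mpp {l : List α} (hl : l.Pairwise (· > ·)) {t : ℕ}
    (ht : t < (Zw l).length) (hte : Even t) : (Zw l).eraseIdx t ∉ Mpp := by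
  induction l generalizing t with
  | nil => simp [Zw] at ht
  | cons a l ih =>
    have hlen : (Zw l : List α).length = 2 ^ l.length - 1 := length_Zw l
    have hp : 1 ≤ 2 ^ l.length := Nat.one_le_two_pow
    have ht' : t < 2 * (Zw l : List α).length + 1 := by
      have := ht
      simp only [show Zw (a :: l) = Zw l ++ a :: Zw l from rfl, List.length_append,
        List.length_cons] at this
      omega
    have h1 : ∀ c ∈ (Zw l : List α), c < a :=
      fun c hc => (List.pairwise_cons.mp hl).1 c (mem_Zw.mp hc)
    have hnZ : (Zw l : List α) ∉ Mpp := Zw_not_mem_Mpp hl.of_cons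
    have hev : l.length ≠ 0 → Even (2 ^ l.length) :=
      fun h0 => (Nat.even_pow).mpr ⟨even_two, h0⟩
    rcases lt_trichotomy t (Zw l : List α).length with h | h | h
    · rw [show Zw (a :: l) = Zw l ++ a :: Zw l from rfl,
        List.eraseIdx_append_of_lt_length h]
      have h1' : ∀ c ∈ (Zw l).eraseIdx t, c < a :=
        fun c hc => h1 c ((List.eraseIdx_sublist _ t).mem hc)
      exact not_mem_Mpp_glue h1' h1 (ih hl.of_cons h hte) hnZ
    · -- t = length: t even, length = 2^k - 1
      rcases Nat.eq_zero_or_pos l.length with h0 | h0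
      · -- l = [], Zw (a :: l) = [a], t = 0
        have hl0 : l = [] := List.length_eq_zero_iff.mp h0
        subst hl0
        have ht0 : t = 0 := by simp [Zw] at h; exact h
        subst ht0
        simpa [Zw] using (nil_not_mem_Mpp : ([] : List α) ∉ Mpp)
      · exfalso
        obtain ⟨c, hc⟩ := hev (by omega)
        obtain ⟨s, hs⟩ := hte
        omega
    · rw [show Zw (a :: l) = Zw l ++ a :: Zw l from rfl,
        List.eraseIdx_append_of_length_le (by omega)]
      have he : (a :: Zw l : List α).eraseIdx (t - (Zw l).length)
          = a :: (Zw l).eraseIdx (t - (Zw l).length - 1) := by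
        obtain ⟨j, hj⟩ : ∃ j, t - (Zw l : List α).length = j + 1 := ⟨t - (Zw l : List α).length - 1, by omega⟩
        rw [hj, List.eraseIdx_cons_succ]
        simp
      rw [he]
      have h0 : l.length ≠ 0 := by
        intro h0
        have : (Zw l : List α).length = 0 := by rw [hlen, h0]; simp
        omega
      obtain ⟨c, hc⟩ := hev h0
      obtain ⟨s, hs⟩ := hte
      have hlt : t - (Zw l).length - 1 < (Zw l : List α).length := by omega
      have heven : Even (t - (Zw l).length - 1) := ⟨(t - 2 ^ l.length) / 2, by omega⟩
      have h1' : ∀ c ∈ (Zw l).eraseIdx (t - (Zw l).length - 1), c < a :=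
        fun c hc => h1 c ((List.eraseIdx_sublist _ _).mem hc)
      exact not_mem_Mpp_glue h1 h1' hnZ (ih hl.of_cons hlt heven)

end Zw

section NFARun
variable {α σ : Type*} (M : NFA α σ)

lemma NFA.evalFrom_mono {S T : Set σ} (h : S ⊆ T) (w : List α) :
    M.evalFrom S w ⊆ M.evalFrom T w := by
  induction w generalizing S T with
  | nil => simpa [NFA.evalFrom] using h
  | cons a w ih =>
    have hs : M.stepSet S a ⊆ M.stepSet T a := by
      intro q hq
      rw [NFA.mem_stepSet] at hq ⊢
      obtain ⟨s, hs, h2⟩ := hq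
      exact ⟨s, h hs, h2⟩
    exact ih hs

lemma NFA.evalFrom_trans {p q r : σ} {w₁ w₂ : List α}
    (h1 : q ∈ M.evalFrom {p} w₁) (h2 : r ∈ M.evalFrom {q} w₂) :
    r ∈ M.evalFrom {p} (w₁ ++ w₂) := by
  have : M.evalFrom {p} (w₁ ++ w₂) = M.evalFrom (M.evalFrom {p} w₁) w₂ := by
    simp [NFA.evalFrom, List.foldl_append]
  rw [this]
  exact NFA.evalFrom_mono M (by simpa using h1) w₂ h2

lemma NFA.exists_run {S : Set σ} {w : List α} {q : σ} (h : q ∈ M.evalFrom S w) :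
    ∃ r : ℕ → σ, r 0 ∈ S ∧ r w.length = q ∧
      ∀ t (ht : t < w.length), r (t + 1) ∈ M.step (r t) (w[t]'ht) := by
  induction w generalizing S with
  | nil =>
    refine ⟨fun _ => q, by simpa [NFA.evalFrom] using h, rfl, by simp⟩
  | cons a w ih =>
    have h' : q ∈ M.evalFrom (M.stepSet S a) w := h
    obtain ⟨r, hr0, hrl, hrs⟩ := ih h'
    rw [NFA.mem_stepSet] at hr0
    obtain ⟨s, hs, hstep⟩ := hr0
    refine ⟨fun t => if t = 0 then s else r (t - 1), by simp [hs], by simp [hrl], ?_⟩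
    intro t ht
    cases t with
    | zero => simpa using hstep
    | succ t =>
      simp only [Nat.succ_ne_zero, if_false, Nat.add_sub_cancel, List.getElem_cons_succ]
      exact hrs t (by simpa using ht)

lemma NFA.run_segment {w : List α} {r : ℕ → σ}
    (hr : ∀ t (ht : t < w.length), r (t + 1) ∈ M.step (r t) (w[t]'ht))
    {s t : ℕ} (hst : s ≤ t) (ht : t ≤ w.length) :
    r t ∈ M.evalFrom {r s} ((w.drop s).take (t - s)) := by
  induction t, hst using Nat.le_induction with
  | base => simp [NFA.evalFrom]
  | succ t hst ih =>
    have ht' : t < w.length := ht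
    have hseg : (w.drop s).take (t + 1 - s) =
        (w.drop s).take (t - s) ++ [w[t]'ht'] := by
      have hlt : t - s < (w.drop s).length := by simp [List.length_drop]; omega
      rw [show t + 1 - s = (t - s) + 1 from by omega, List.take_succ,
        List.getElem?_eq_getElem hlt]
      simp [List.getElem_drop, show s + (t - s) = t from by omega]
    rw [hseg, NFA.evalFrom_append, NFA.evalFrom_singleton, NFA.mem_stepSet]
    exact ⟨r t, ih (le_of_lt ht'), hr t ht'⟩

lemma NFA.run_reach {w : List α} {r : ℕ → σ}
    (hr : ∀ t (ht : t < w.length), r (t + 1) ∈ M.step (r t) (w[t]'ht))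
    {s t : ℕ} (hst : s ≤ t) (ht : t ≤ w.length) : M.Reach (r s) (r t) :=
  ⟨_, M.run_segment hr hst ht⟩

lemma NFA.run_delete {w : List α} {r : ℕ → σ}
    (hr : ∀ t (ht : t < w.length), r (t + 1) ∈ M.step (r t) (w[t]'ht))
    {t : ℕ} (ht : t < w.length) (heq : r t = r (t + 1)) :
    r w.length ∈ M.evalFrom {r 0} (w.eraseIdx t) := by
  have h1 : r t ∈ M.evalFrom {r 0} (w.take t) := by
    have := M.run_segment hr (Nat.zero_le t) (le_of_lt ht)
    simpa using this
  have h2 : r w.length ∈ M.evalFrom {r (t + 1)} (w.drop (t + 1)) := by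
    have := M.run_segment hr (Nat.succ_le_of_lt ht) (le_refl w.length)
    have htake : ((w.drop (t + 1)).take (w.length - (t + 1))) = w.drop (t + 1) := by
      apply List.take_of_length_le
      simp [List.length_drop]
    rwa [htake] at this
  rw [← heq] at h2
  rw [List.eraseIdx_eq_take_drop_succ]
  exact M.evalFrom_trans h1 h2

end NFARun

/-- Every partially ordered NFA accepting `M_n = M'_n ∪ M''_n` has more than
`2^(n-1)` states. -/
theorem stmt_11 (n : ℕ) (hn : 1 ≤ n) (σ : Type) [Fintype σ]
    (B : NFA (Fin n) σ) (q₀ : σ) (hstart : B.start = {q₀})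
    (hpo : B.PartiallyOrdered)
    (hacc : ∀ w : List (Fin n),
      w ∈ B.accepts ↔ (Odd w.length ∨ w ∈ (Mpp : Set (List (Fin n))))) :
    2 ^ (n - 1) < Fintype.card σ := by
  -- the Zimin word over the descending list of all letters
  set lev : List (Fin n) := (List.finRange n).reverse with hlev
  have hlevsort : lev.Pairwise (· > ·) := by
    rw [hlev, List.pairwise_reverse]
    exact List.pairwise_lt_finRange n
  set w : List (Fin n) := Zw lev with hwdef
  have hpow : 2 ^ n = 2 * 2 ^ (n - 1) := by
    rcases Nat.exists_eq_add_of_le hn with ⟨j, hj⟩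
    subst hj
    rw [show 1 + j - 1 = j from by omega, pow_add, pow_one]
  have hp1 : 1 ≤ 2 ^ (n - 1) := Nat.one_le_two_pow
  have hwlen : w.length = 2 ^ n - 1 := by
    rw [hwdef, length_Zw, hlev, List.length_reverse, List.length_finRange]
  have hwodd : Odd w.length := ⟨2 ^ (n - 1) - 1, by omega⟩
  -- w is accepted
  have hwacc : w ∈ B.accepts := (hacc w).mpr (Or.inl hwodd)
  rw [NFA.mem_accepts, hstart] at hwacc
  obtain ⟨f, hf, hfw⟩ := hwacc
  obtain ⟨r, hr0, hrl, hrs⟩ := B.exists_run hfw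
  have hr0' : r 0 = q₀ := hr0
  -- every even step changes state
  have hchange : ∀ t, Even t → ∀ ht : t < w.length, r t ≠ r (t + 1) := by
    intro t hte ht heq
    have hdel := B.run_delete hrs ht heq
    rw [hrl, hr0'] at hdel
    have hacc' : w.eraseIdx t ∈ B.accepts := by
      rw [NFA.mem_accepts, hstart]
      exact ⟨f, hf, hdel⟩
    rw [hacc] at hacc'
    have hlen' : (w.eraseIdx t).length = 2 ^ n - 2 := by
      rw [List.length_eraseIdx, if_pos ht, hwlen]
      omega
    rcases hacc' with hodd | hpat
    · rw [hlen'] at hodd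
      obtain ⟨s, hs⟩ := hodd
      omega
    · exact Zw_erase_not_mem_Mpp hlevsort ht hte hpat
  -- constancy from partial order
  have hconst : ∀ a b, a ≤ b → b ≤ w.length → r a = r b →
      ∀ t, a ≤ t → t ≤ b → r t = r a := by
    intro a b hab hb hreq t hat htb
    have h1 : B.Reach (r a) (r t) := B.run_reach hrs hat (le_trans htb hb)
    have h2 : B.Reach (r t) (r b) := B.run_reach hrs htb hb
    rw [← hreq] at h2
    exact (hpo (r a) (r t) h1 h2).symm
  -- the injection
  set N := 2 ^ (n - 1) with hN
  have key : ∀ i j : Fin (N + 1), (i : ℕ) < (j : ℕ) →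
      r (if (i : ℕ) < N then 2 * (i : ℕ) else w.length) =
      r (if (j : ℕ) < N then 2 * (j : ℕ) else w.length) → False := by
    intro i j hlt hij
    have hjn : (j : ℕ) ≤ N := by omega
    have hi : (i : ℕ) < N := by omega
    rw [if_pos hi] at hij
    set a := 2 * (i : ℕ) with ha
    set b := if (j : ℕ) < N then 2 * (j : ℕ) else w.length with hb
    have hblen : b ≤ w.length := by
      rw [hb]
      split
      · rw [hwlen]; omega
      · exact le_refl _
    have hab : a + 1 ≤ b := by
      rw [hb]
      split
      · omega
      · rw [hwlen]; omega
    have halen : a < w.length := by rw [hwlen]; omega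
    have h1 : r (a + 1) = r a :=
      hconst a b (by omega) hblen hij (a + 1) (by omega) hab
    exact hchange a ⟨(i : ℕ), by omega⟩ halen h1.symm
  have hinj : Function.Injective (fun j : Fin (N + 1) =>
      r (if (j : ℕ) < N then 2 * (j : ℕ) else w.length)) := by
    intro i j hij
    rcases lt_trichotomy (i : ℕ) (j : ℕ) with h | h | h
    · exact absurd hij (fun hh => key i j h hh)
    · exact Fin.ext h
    · exact absurd hij.symm (fun hh => key j i h hh)
  have := Fintype.card_le_of_injective _ hinj
  simp only [Fintype.card_fin] at this
  omega
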